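/- (Cycle menus have size at most g − 2) Assume u ≥ 2t − 1. In any execution of the greedy algorithm (repeatedly removing an infeasible good or adding a good with a lobby of size ≥ u), no cycle can contain a menu of cardinality g − 1 or g. More precisely: if along a cycle a good j is added to a menu A with |A| ≥ g − 2 (so |j ≻ A| ≥ u), and j is removed from some menu B along the cycle (so |j ≻ B∖{j}| < t), then some good k ∈ B ∖ A has at least t agents ranking it first, contradicting that k is removed along the cycle. -/

import Mathlib

structure MenuProblem (N G : Type) where
  pref : N → List G
  nodup : ∀ i, (pref i).Nodup

namespace MenuProblem

variable {N G : Type} [Fintype N] [DecidableEq G]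

/-- The good assigned to agent `i` when menu `O` is offered:
its favorite ranked good in `O`, if any. -/
def assigned (P : MenuProblem N G) (O : Finset G) (i : N) : Option G :=
  (P.pref i).find? (fun a => decide (a ∈ O))

/-- Number of agents assigned to good `j` when menu `O` is offered. -/
def assignedCount (P : MenuProblem N G) (O : Finset G) (j : G) : ℕ :=
  (Finset.univ.filter (fun i => P.assigned O i = some j)).card

/-- The lobby for a good `j` against menu `O`: the number of agents that
would take `j` if it were added to the menu. -/
def lobby (P : MenuProblem N G) (O : Finset G) (j : G) : ℕ :=
  P.assignedCount (insert j O) j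

/-- `|a ≻ b|`: the number of agents that would take `a` from the menu `{a, b}`. -/
def prefCount (P : MenuProblem N G) (a b : G) : ℕ :=
  P.assignedCount {a, b} a

/-- A menu is `t`-feasible if every offered good is assigned at least `t` agents. -/
def TFeasible (P : MenuProblem N G) (O : Finset G) (t : ℕ) : Prop :=
  ∀ j ∈ O, t ≤ P.assignedCount O j

/-- A menu is `u`-uncontestable if no unoffered good has a lobby of at least `u` agents. -/
def UUncontestable (P : MenuProblem N G) (O : Finset G) (u : ℕ) : Prop :=
  ∀ j ∉ O, P.lobby O j < u

/-- A menu is `(t,u)`-stable if it is `t`-feasible and `u`-uncontestable. -/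
def Stable (P : MenuProblem N G) (O : Finset G) (t u : ℕ) : Prop :=
  P.TFeasible O t ∧ P.UUncontestable O u

end MenuProblem

/-- Cycle menus have size at most `g − 2`: if `u ≥ 2t − 1`, good `j` has a lobby of at
least `u` against a menu `A` with `|A| ≥ g − 2`, `j ∉ A`, while `j` receives fewer than
`t` agents in a menu `B ∋ j`, then some good `k ∈ B ∖ A`, `k ≠ j`, is ranked first by at
least `t` agents. -/
theorem cycle_menu_card_le (n g t u : ℕ) (P : MenuProblem (Fin n) (Fin g))
    (htu : 2 * t - 1 ≤ u) (A B : Finset (Fin g)) (j : Fin g)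
    (hjA : j ∉ A) (hA : g - 2 ≤ A.card)
    (hadd : u ≤ P.lobby A j) (hjB : j ∈ B) (hrem : P.assignedCount B j < t) :
    ∃ k, k ∈ B ∧ k ∉ A ∧ k ≠ j ∧
      t ≤ (Finset.univ.filter (fun i => (P.pref i).head? = some k)).card := by
  classical
  have ht1 : 1 ≤ t := by omega
  set Su : Finset (Fin n) :=
    Finset.univ.filter (fun i => P.assigned (insert j A) i = some j) with hSu
  set Sb : Finset (Fin n) :=
    Finset.univ.filter (fun i => P.assigned B i = some j) with hSb
  have hSu_card : u ≤ Su.card := hadd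
  have hSb_card : Sb.card < t := hrem
  -- the complement of `insert j A` has at most one element
  have hcompl : ((insert j A)ᶜ : Finset (Fin g)).card ≤ 1 := by
    have h1 : g - 1 ≤ (insert j A).card := by
      rw [Finset.card_insert_of_notMem hjA]; omega
    have h2 : (insert j A).card ≤ g := by
      simpa using Finset.card_le_card (Finset.subset_univ (insert j A))
    rw [Finset.card_compl]
    simp only [Fintype.card_fin]
    omega
  -- key claim: every agent in Su \ Sb has head? = some b for some b in the complement ∩ B
  have key : ∀ i ∈ Su \ Sb, ∃ b, b ∈ ((insert j A)ᶜ : Finset (Fin g)) ∧ b ∈ B ∧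
      (P.pref i).head? = some b := by
    intro i hi
    rw [Finset.mem_sdiff, hSu, hSb, Finset.mem_filter, Finset.mem_filter] at hi
    obtain ⟨⟨-, hiu⟩, hib⟩ := hi
    have hib' : P.assigned B i ≠ some j := fun h => hib ⟨Finset.mem_univ i, h⟩
    rw [MenuProblem.assigned, List.find?_eq_some_iff_append] at hiu
    obtain ⟨-, as, bs, hdecomp, has⟩ := hiu
    have has' : ∀ a ∈ as, a ∉ insert j A := by
      intro a ha
      have := has a ha
      simpa using this
    -- find? over B on as must be some b
    have hfindB : P.assigned B i = ((as.find? (fun a => decide (a ∈ B))).or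
        ((j :: bs).find? (fun a => decide (a ∈ B)))) := by
      rw [MenuProblem.assigned, hdecomp, List.find?_append]
    have hjfind : (j :: bs).find? (fun a => decide (a ∈ B)) = some j :=
      List.find?_cons_of_pos (by simpa using hjB)
    obtain hnone | ⟨b, hb⟩ : as.find? (fun a => decide (a ∈ B)) = none ∨
        ∃ b, as.find? (fun a => decide (a ∈ B)) = some b := by
      cases h : as.find? (fun a => decide (a ∈ B)) with
      | none => exact Or.inl rfl
      | some b => exact Or.inr ⟨b, rfl⟩
    · exact absurd (by rw [hfindB, hnone, hjfind]; rfl) hib'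
    · have hbB : b ∈ B := by simpa using List.find?_some hb
      have hbas : b ∈ as := List.mem_of_find?_eq_some hb
      have hbc : b ∈ ((insert j A)ᶜ : Finset (Fin g)) := by
        simpa [Finset.mem_compl] using has' b hbas
      -- every element of as equals b, so as = [b]
      have hall : ∀ x ∈ as, x = b := by
        intro x hx
        have hxc : x ∈ ((insert j A)ᶜ : Finset (Fin g)) := by
          simpa [Finset.mem_compl] using has' x hx
        exact Finset.card_le_one.mp hcompl x hxc b hbc
      have hnd : as.Nodup := by
        have := P.nodup i
        rw [hdecomp] at this
        exact this.of_append_left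
      have haseq : as = [b] := by
        cases as with
        | nil => simp at hbas
        | cons x xs =>
          have hx : x = b := hall x (List.mem_cons_self (a := x) (l := xs))
          have hxs : xs = [] := by
            cases xs with
            | nil => rfl
            | cons y ys =>
              have hy : y = b := hall y (by simp)
              have := hnd
              rw [hx, hy] at this
              simp at this
          rw [hx, hxs]
      refine ⟨b, hbc, hbB, ?_⟩
      rw [hdecomp, haseq]
      rfl
  -- Su \ Sb has at least t elements
  have hcard : t ≤ (Su \ Sb).card := by
    have := Finset.le_card_sdiff Sb Su
    omega
  have hne : (Su \ Sb).Nonempty := Finset.card_pos.mp (by omega)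
  obtain ⟨i₀, hi₀⟩ := hne
  obtain ⟨k, hkc, hkB, hkh⟩ := key i₀ hi₀
  have hkA : k ∉ insert j A := by simpa [Finset.mem_compl] using hkc
  refine ⟨k, hkB, fun h => hkA (Finset.mem_insert_of_mem h), fun h => hkA (h ▸ Finset.mem_insert_self j A), ?_⟩
  refine le_trans hcard (Finset.card_le_card ?_)
  intro i hi
  obtain ⟨b, hbc, -, hbh⟩ := key i hi
  have hbk : b = k := Finset.card_le_one.mp hcompl b hbc k hkc
  rw [Finset.mem_filter]
  exact ⟨Finset.mem_univ i, by rw [hbh, hbk]⟩
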